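/- Let π : su(N) → su(N) be an orthogonal projection with respect to the inner product ⟨A,B⟩ = −tr(AB), and suppose Δ_N commutes with π. If W̄ solves the projected equation dW̄/dt = π[P̄, W̄] with Δ_N P̄ = W̄ and W̄ in the range of π, then the enstrophy tr(W̄²) is conserved. -/

import Mathlib

open Matrix

attribute [local instance] Matrix.normedAddCommGroup Matrix.normedSpace

/-- Let `π` be an orthogonal projection on `su(N)` for `⟨A,B⟩ = -tr(A*B)` and let `Δ_N`
be an invertible symmetric operator commuting with `π`.  If `W̄` solves the projected
Euler–Zeitlin equation `dW̄/dt = π[P̄,W̄]`, `Δ_N P̄ = W̄`, with `W̄` in the range of `π`,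
then the enstrophy `tr(W̄²)` is conserved. -/
theorem projected_enstrophy_conserved (N : ℕ)
    (p D : Matrix (Fin N) (Fin N) ℂ →ₗ[ℝ] Matrix (Fin N) (Fin N) ℂ)
    (hproj : ∀ A, p (p A) = p A)
    (hpsym : ∀ A B : Matrix (Fin N) (Fin N) ℂ,
      -Matrix.trace (p A * B) = -Matrix.trace (A * p B))
    (hDbij : Function.Bijective D)
    (hDsym : ∀ A B : Matrix (Fin N) (Fin N) ℂ,
      -Matrix.trace (A * D B) = -Matrix.trace (D A * B))
    (hcomm : ∀ A, D (p A) = p (D A))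
    (W P : ℝ → Matrix (Fin N) (Fin N) ℂ)
    (hsu : ∀ t, (W t)ᴴ = -(W t) ∧ Matrix.trace (W t) = 0)
    (hrange : ∀ t, p (W t) = W t)
    (hPoisson : ∀ t, D (P t) = W t)
    (hODE : ∀ t, HasDerivAt W (p (P t * W t - W t * P t)) t) :
    ∀ t, HasDerivAt (fun s => Matrix.trace (W s * W s)) 0 t := by
  intro t
  set W' := p (P t * W t - W t * P t) with hW'
  -- key: trace (W' * W t) = 0
  have key : Matrix.trace (W' * W t) = 0 := by
    have h1 := hpsym (P t * W t - W t * P t) (W t)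
    rw [hrange t] at h1
    have h2 : Matrix.trace ((P t * W t - W t * P t) * W t) = 0 := by
      rw [Matrix.sub_mul, Matrix.trace_sub, sub_eq_zero,
        Matrix.trace_mul_cycle (W t) (P t) (W t), Matrix.mul_assoc (P t),
        Matrix.trace_mul_comm (P t), Matrix.mul_assoc]
    have := neg_injective h1
    rw [← hW'] at this
    rw [this, h2]
  have key2 : Matrix.trace (W t * W') = 0 := by
    rw [Matrix.trace_mul_comm]; exact key
  -- entrywise derivative
  have hent : ∀ i j, HasDerivAt (fun s => W s i j) (W' i j) t := by
    intro i j
    exact (LinearMap.toContinuousLinearMap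
      (LinearMap.mk (AddHom.mk (fun A : Matrix (Fin N) (Fin N) ℂ => A i j)
        (fun _ _ => rfl)) (fun _ _ => rfl : ∀ (c : ℝ) (A : Matrix (Fin N) (Fin N) ℂ), (c • A) i j = (RingHom.id ℝ) c • A i j))).hasFDerivAt.comp_hasDerivAt t (hODE t)
  have hderiv : HasDerivAt (fun s => Matrix.trace (W s * W s))
      (∑ i, ∑ j, (W' i j * W t j i + W t i j * W' j i)) t := by
    have htr : (fun s => Matrix.trace (W s * W s))
        = fun s => ∑ i, ∑ j, W s i j * W s j i := by
      funext s; simp [Matrix.trace, Matrix.diag, Matrix.mul_apply]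
    rw [htr]
    apply HasDerivAt.fun_sum; intro i _
    apply HasDerivAt.fun_sum; intro j _
    exact (hent i j).mul (hent j i)
  have hzero : (∑ i, ∑ j, (W' i j * W t j i + W t i j * W' j i)) = 0 := by
    have : (∑ i, ∑ j, (W' i j * W t j i + W t i j * W' j i))
        = Matrix.trace (W' * W t) + Matrix.trace (W t * W') := by
      simp [Matrix.trace, Matrix.diag, Matrix.mul_apply, Finset.sum_add_distrib]
    rw [this, key, key2, add_zero]
  rwa [hzero] at hderiv
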